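/- arXiv:2505.00787 — 3 statements merged into one kernel-verified Lean document; each statement's English description precedes it below -/
import Mathlib

section
/- Let Π = {π₁,...,πₙ} be a finite set of policies in a finite MDP with reward r, each with action-value function q^{πᵢ}. Define the GPI policy π'(s) ∈ argmax_a max_i q^{πᵢ}(s,a). Then for all states s and actions a, q^{π'}(s,a) ≥ max_i q^{πᵢ}(s,a). -/
/-- GPI theorem: the GPI policy, greedy w.r.t. the pointwise maximum of the
action-value functions of a finite set of policies, has an action-value
function dominating every base policy's action-value function. -/
theorem gpi_policy_improvement
    {S A : Type} [Fintype S] [Fintype A]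
    (p : S → A → S → ℝ)
    (hp0 : ∀ s a s', 0 ≤ p s a s') (hp1 : ∀ s a, ∑ s', p s a s' = 1)
    (r : S → A → ℝ) (γ : ℝ) (hγ0 : 0 ≤ γ) (hγ1 : γ < 1)
    (Pols : Finset (S → A)) (hPols : Pols.Nonempty)
    (q : (S → A) → S → A → ℝ)
    (hq : ∀ π ∈ Pols, ∀ s a,
      q π s a = r s a + γ * ∑ s', p s a s' * q π s' (π s'))
    (π' : S → A)
    (hπ' : ∀ s a, (Pols.sup' hPols fun π => q π s a) ≤
      Pols.sup' hPols fun π => q π s (π' s))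
    (q' : S → A → ℝ)
    (hq' : ∀ s a, q' s a = r s a + γ * ∑ s', p s a s' * q' s' (π' s')) :
    ∀ s a, (Pols.sup' hPols fun π => q π s a) ≤ q' s a := by
  intro s a
  have hS : Nonempty S := ⟨s⟩
  have hUniv : (Finset.univ : Finset S).Nonempty := Finset.univ_nonempty
  set Q : S → A → ℝ := fun t b => Pols.sup' hPols fun π => q π t b with hQdef
  set M : ℝ := Finset.univ.sup' hUniv (fun t => Q t (π' t) - q' t (π' t)) with hMdef
  have key : ∀ t b, Q t b - q' t b ≤ γ * M := by
    intro t b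
    obtain ⟨π, hπmem, hπeq⟩ := Finset.exists_mem_eq_sup' hPols (fun π => q π t b)
    have h1 : Q t b = q π t b := hπeq
    have h2 : Q t b - q' t b
        = γ * ∑ s', p t b s' * (q π s' (π s') - q' s' (π' s')) := by
      rw [h1, hq π hπmem, hq' t b]
      simp only [mul_sub, Finset.sum_sub_distrib, Finset.mul_sum]
      ring
    rw [h2]
    have hsum : ∑ s', p t b s' * (q π s' (π s') - q' s' (π' s')) ≤ M := by
      calc ∑ s', p t b s' * (q π s' (π s') - q' s' (π' s'))
          ≤ ∑ s', p t b s' * M := by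
            apply Finset.sum_le_sum
            intro s' _
            apply mul_le_mul_of_nonneg_left _ (hp0 t b s')
            have hqQ : q π s' (π s') ≤ Q s' (π s') := by
              simp only [hQdef]
              exact Finset.le_sup' (fun ρ => q ρ s' (π s')) hπmem
            have hQQ : Q s' (π s') ≤ Q s' (π' s') := hπ' s' (π s')
            have hM : Q s' (π' s') - q' s' (π' s') ≤ M := by
              simp only [hMdef, hQdef]
              exact Finset.le_sup' (fun t => Q t (π' t) - q' t (π' t))
                (Finset.mem_univ s')
            linarith
        _ = M := by rw [← Finset.sum_mul, hp1, one_mul]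
    exact mul_le_mul_of_nonneg_left hsum hγ0
  have hMγ : M ≤ γ * M := by
    obtain ⟨t, _, ht⟩ := Finset.exists_mem_eq_sup' hUniv
      (fun t => Q t (π' t) - q' t (π' t))
    calc M = Q t (π' t) - q' t (π' t) := by rw [hMdef, ht]
      _ ≤ γ * M := key t (π' t)
  have hM0 : M ≤ 0 := by nlinarith
  have := key s a
  nlinarith
end

section
/- Let {πᵢ}ᵢ₌₁ⁿ be policies optimal for tasks {wᵢ} and let w be an arbitrary task in the simplex. Suppose the approximate action-value functions satisfy |q^{πᵢ}_w(s,a) − q̂^{πᵢ}_w(s,a)| ≤ ε for all (s,a) and all i, and let φ_max = max_{s,a} ||φ(s,a)||. Then the GPI policy π^GPI computed from the approximations satisfies q*_w(s,a) − q^{π^GPI}_w(s,a) ≤ (2/(1−γ)) (φ_max · minᵢ ||w − wᵢ|| + ε) for all (s,a). -/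
open scoped RealInnerProductSpace

private lemma geom_bound {M c γ : ℝ} (hγ1 : γ < 1) (h : M ≤ c + γ * M) :
    M ≤ c / (1 - γ) := by
  rw [le_div_iff₀ (by linarith)]
  nlinarith

private lemma sup'_le_sup'_add {α : Type*} (s : Finset α) (h : s.Nonempty)
    (f g : α → ℝ) (c : ℝ) (hc : ∀ x ∈ s, f x ≤ g x + c) :
    s.sup' h f ≤ s.sup' h g + c :=
  Finset.sup'_le h f fun x hx => (hc x hx).trans (add_le_add_left (Finset.le_sup' g hx) c)

/-- Theorem 2 of Barreto et al. (2017): suboptimality bound for the GPI policy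
computed from ε-accurate action-value approximations of policies optimal for
tasks wᵢ: q*_w − q^{GPI}_w ≤ (2/(1−γ)) (φ_max · minᵢ ‖w − wᵢ‖ + ε). -/
theorem gpi_suboptimality_bound
    {S A : Type} [Fintype S] [Fintype A] [Nonempty S] [Nonempty A] {d n : ℕ}
    (p : S → A → S → ℝ)
    (hp0 : ∀ s a s', 0 ≤ p s a s') (hp1 : ∀ s a, ∑ s', p s a s' = 1)
    (γ : ℝ) (hγ0 : 0 ≤ γ) (hγ1 : γ < 1)
    (φ : S → A → EuclideanSpace ℝ (Fin d))
    (ψ : (S → A) → S → A → EuclideanSpace ℝ (Fin d))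
    (hψ : ∀ (π : S → A) (s : S) (a : A),
      ψ π s a = φ s a + γ • ∑ s', p s a s' • ψ π s' (π s'))
    (ws : Fin (n + 1) → EuclideanSpace ℝ (Fin d))
    (πs : Fin (n + 1) → S → A)
    (w : EuclideanSpace ℝ (Fin d))
    (hw : (∑ i, w i = 1) ∧ ∀ i, 0 ≤ w i)
    (qstar : EuclideanSpace ℝ (Fin d) → S → A → ℝ)
    (hqstar : ∀ v s a, qstar v s a = ⟪φ s a, v⟫ + γ * ∑ s', p s a s' *
      Finset.univ.sup' Finset.univ_nonempty (qstar v s'))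
    (hopt : ∀ (i : Fin (n + 1)) (s : S) (a : A),
      ⟪ψ (πs i) s a, ws i⟫ = qstar (ws i) s a)
    (qhat : Fin (n + 1) → S → A → ℝ) (ε : ℝ)
    (hε : ∀ i s a, |⟪ψ (πs i) s a, w⟫ - qhat i s a| ≤ ε)
    (φmax : ℝ)
    (hφmax : φmax = Finset.univ.sup' Finset.univ_nonempty
      fun sa : S × A => ‖φ sa.1 sa.2‖)
    (πG : S → A)
    (hπG : ∀ s a, (Finset.univ.sup' Finset.univ_nonempty fun i => qhat i s a) ≤
      Finset.univ.sup' Finset.univ_nonempty fun i => qhat i s (πG s))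
    (qG : S → A → ℝ)
    (hqG : ∀ s a, qG s a = ⟪φ s a, w⟫ + γ * ∑ s', p s a s' * qG s' (πG s')) :
    ∀ s a, qstar w s a - qG s a ≤ (2 / (1 - γ)) *
      (φmax * (Finset.univ.inf' Finset.univ_nonempty fun i => ‖w - ws i‖) + ε) := by
  have h1γ : (0:ℝ) < 1 - γ := by linarith
  have hφle : ∀ s a, ‖φ s a‖ ≤ φmax := by
    intro s a; rw [hφmax]
    exact Finset.le_sup' (fun sa : S × A => ‖φ sa.1 sa.2‖) (Finset.mem_univ (s, a))
  have hε0 : 0 ≤ ε := le_trans (abs_nonneg _)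
    (hε 0 (Classical.arbitrary S) (Classical.arbitrary A))
  -- linearity of q^π in the task vector
  have hlin : ∀ (π : S → A) (v : EuclideanSpace ℝ (Fin d)) (s : S) (a : A),
      ⟪ψ π s a, v⟫ = ⟪φ s a, v⟫ + γ * ∑ s', p s a s' * ⟪ψ π s' (π s'), v⟫ := by
    intro π v s a
    rw [hψ π s a, inner_add_left, real_inner_smul_left, sum_inner]
    congr 2
    exact Finset.sum_congr rfl fun s' _ => real_inner_smul_left _ _ _
  -- bound on the successor features
  have hψnorm : ∀ (π : S → A) (s : S) (a : A), ‖ψ π s a‖ ≤ φmax / (1 - γ) := by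
    intro π
    set M := (Finset.univ : Finset (S × A)).sup' Finset.univ_nonempty
      (fun sa => ‖ψ π sa.1 sa.2‖) with hMdef
    have hle : ∀ s a, ‖ψ π s a‖ ≤ M := fun s a =>
      Finset.le_sup' (fun sa : S × A => ‖ψ π sa.1 sa.2‖) (Finset.mem_univ (s, a))
    have step : ∀ s a, ‖ψ π s a‖ ≤ φmax + γ * M := by
      intro s a
      have hsum : ‖∑ s', p s a s' • ψ π s' (π s')‖ ≤ M := by
        calc ‖∑ s', p s a s' • ψ π s' (π s')‖
            ≤ ∑ s', ‖p s a s' • ψ π s' (π s')‖ := norm_sum_le _ _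
          _ = ∑ s', p s a s' * ‖ψ π s' (π s')‖ := by
              refine Finset.sum_congr rfl fun s' _ => ?_
              rw [norm_smul, Real.norm_eq_abs, abs_of_nonneg (hp0 s a s')]
          _ ≤ ∑ s', p s a s' * M :=
              Finset.sum_le_sum fun s' _ =>
                mul_le_mul_of_nonneg_left (hle _ _) (hp0 s a s')
          _ = M := by rw [← Finset.sum_mul, hp1 s a, one_mul]
      calc ‖ψ π s a‖ = ‖φ s a + γ • ∑ s', p s a s' • ψ π s' (π s')‖ := by rw [hψ π s a]
        _ ≤ ‖φ s a‖ + ‖γ • ∑ s', p s a s' • ψ π s' (π s')‖ := norm_add_le _ _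
        _ = ‖φ s a‖ + γ * ‖∑ s', p s a s' • ψ π s' (π s')‖ := by
            rw [norm_smul, Real.norm_eq_abs, abs_of_nonneg hγ0]
        _ ≤ φmax + γ * M :=
            add_le_add (hφle s a) (mul_le_mul_of_nonneg_left hsum hγ0)
    have hMle : M ≤ φmax + γ * M := Finset.sup'_le _ _ fun sa _ => step sa.1 sa.2
    intro s a
    exact (hle s a).trans (geom_bound hγ1 hMle)
  -- Lipschitz continuity of q* in the task vector (one-sided)
  have hqlip : ∀ v v' : EuclideanSpace ℝ (Fin d), ∀ s a,
      qstar v s a - qstar v' s a ≤ φmax * ‖v - v'‖ / (1 - γ) := by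
    intro v v'
    set M := (Finset.univ : Finset (S × A)).sup' Finset.univ_nonempty
      (fun sa => qstar v sa.1 sa.2 - qstar v' sa.1 sa.2) with hMdef
    have hle : ∀ s a, qstar v s a - qstar v' s a ≤ M := fun s a =>
      Finset.le_sup' (fun sa : S × A => qstar v sa.1 sa.2 - qstar v' sa.1 sa.2)
        (Finset.mem_univ (s, a))
    have step : ∀ s a, qstar v s a - qstar v' s a ≤ φmax * ‖v - v'‖ + γ * M := by
      intro s a
      have hsups : ∀ s' : S, Finset.univ.sup' Finset.univ_nonempty (qstar v s') ≤
          Finset.univ.sup' Finset.univ_nonempty (qstar v' s') + M :=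
        fun s' => sup'_le_sup'_add _ _ _ _ _ fun a' _ => by linarith [hle s' a']
      have hinner : ⟪φ s a, v⟫ - ⟪φ s a, v'⟫ ≤ φmax * ‖v - v'‖ := by
        rw [← inner_sub_right]
        calc ⟪φ s a, v - v'⟫ ≤ |⟪φ s a, v - v'⟫| := le_abs_self _
          _ ≤ ‖φ s a‖ * ‖v - v'‖ := abs_real_inner_le_norm _ _
          _ ≤ φmax * ‖v - v'‖ := mul_le_mul_of_nonneg_right (hφle s a) (norm_nonneg _)
      have hsum : (∑ s', p s a s' * Finset.univ.sup' Finset.univ_nonempty (qstar v s'))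
          ≤ (∑ s', p s a s' * Finset.univ.sup' Finset.univ_nonempty (qstar v' s')) + M := by
        calc ∑ s', p s a s' * Finset.univ.sup' Finset.univ_nonempty (qstar v s')
            ≤ ∑ s', p s a s' * (Finset.univ.sup' Finset.univ_nonempty (qstar v' s') + M) :=
              Finset.sum_le_sum fun s' _ =>
                mul_le_mul_of_nonneg_left (hsups s') (hp0 s a s')
          _ = _ := by
              simp [mul_add, Finset.sum_add_distrib, ← Finset.sum_mul, hp1 s a]
      have hmul := mul_le_mul_of_nonneg_left hsum hγ0
      have hexp : γ * ((∑ s', p s a s' *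
            Finset.univ.sup' Finset.univ_nonempty (qstar v' s')) + M)
          = γ * (∑ s', p s a s' *
            Finset.univ.sup' Finset.univ_nonempty (qstar v' s')) + γ * M := by ring
      rw [hqstar v s a, hqstar v' s a]
      rw [hexp] at hmul
      linarith
    have hMle : M ≤ φmax * ‖v - v'‖ + γ * M :=
      Finset.sup'_le _ _ fun sa _ => step sa.1 sa.2
    intro s a
    exact (hle s a).trans (geom_bound hγ1 hMle)
  -- GPI: the GPI policy is 2ε/(1-γ)-close to the best of the policies
  set Qmax : S → A → ℝ := fun s a =>
    Finset.univ.sup' Finset.univ_nonempty (fun i : Fin (n+1) => ⟪ψ (πs i) s a, w⟫)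
    with hQmaxdef
  have hQkey : ∀ s (a' : A), Qmax s a' ≤ Qmax s (πG s) + 2 * ε := by
    intro s a'
    have h1 : Qmax s a' ≤ (Finset.univ.sup' Finset.univ_nonempty fun i => qhat i s a') + ε :=
      sup'_le_sup'_add _ _ _ _ _ fun i _ => by
        have h := hε i s a'; rw [abs_le] at h; linarith [h.2]
    have h2 : (Finset.univ.sup' Finset.univ_nonempty fun i => qhat i s (πG s))
        ≤ Qmax s (πG s) + ε :=
      sup'_le_sup'_add _ _ _ _ _ fun i _ => by
        have h := hε i s (πG s); rw [abs_le] at h; linarith [h.1]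
    have h3 := hπG s a'
    linarith
  have hGPI : ∀ s a, Qmax s a - qG s a ≤ 2 * ε / (1 - γ) := by
    set Δ := (Finset.univ : Finset (S × A)).sup' Finset.univ_nonempty
      (fun sa => Qmax sa.1 sa.2 - qG sa.1 sa.2) with hΔdef
    have hle : ∀ s a, Qmax s a - qG s a ≤ Δ := fun s a =>
      Finset.le_sup' (fun sa : S × A => Qmax sa.1 sa.2 - qG sa.1 sa.2)
        (Finset.mem_univ (s, a))
    have step : ∀ s a, Qmax s a - qG s a ≤ 2 * ε + γ * Δ := by
      intro s a
      obtain ⟨i, -, hi⟩ := Finset.exists_mem_eq_sup' (Finset.univ_nonempty)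
        (fun i : Fin (n+1) => ⟪ψ (πs i) s a, w⟫)
      have hQsa : Qmax s a = ⟪ψ (πs i) s a, w⟫ := hi
      have hterm : ∀ s', ⟪ψ (πs i) s' (πs i s'), w⟫ ≤ qG s' (πG s') + (Δ + 2 * ε) := by
        intro s'
        have h1 : ⟪ψ (πs i) s' (πs i s'), w⟫ ≤ Qmax s' (πs i s') :=
          Finset.le_sup' (fun i' : Fin (n+1) => ⟪ψ (πs i') s' (πs i s'), w⟫)
            (Finset.mem_univ i)
        have h2 := hQkey s' (πs i s')
        have h3 := hle s' (πG s')
        linarith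
      have hsum : ∑ s', p s a s' * ⟪ψ (πs i) s' (πs i s'), w⟫
          ≤ (∑ s', p s a s' * qG s' (πG s')) + (Δ + 2 * ε) := by
        calc ∑ s', p s a s' * ⟪ψ (πs i) s' (πs i s'), w⟫
            ≤ ∑ s', p s a s' * (qG s' (πG s') + (Δ + 2 * ε)) :=
              Finset.sum_le_sum fun s' _ =>
                mul_le_mul_of_nonneg_left (hterm s') (hp0 s a s')
          _ = _ := by
              simp [mul_add, Finset.sum_add_distrib, ← Finset.sum_mul, hp1 s a]
      have hmul := mul_le_mul_of_nonneg_left hsum hγ0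
      have hexp : γ * ((∑ s', p s a s' * qG s' (πG s')) + (Δ + 2 * ε))
          = γ * (∑ s', p s a s' * qG s' (πG s')) + γ * Δ + γ * (2 * ε) := by ring
      rw [hexp] at hmul
      have hγε : γ * (2 * ε) ≤ 2 * ε := by nlinarith
      rw [hQsa, hlin (πs i) w s a, hqG s a]
      linarith
    have hΔle : Δ ≤ 2 * ε + γ * Δ := Finset.sup'_le _ _ fun sa _ => step sa.1 sa.2
    intro s a
    exact (hle s a).trans (geom_bound hγ1 hΔle)
  -- assemble
  intro s a
  obtain ⟨j, -, hj⟩ := Finset.exists_mem_eq_inf' (Finset.univ_nonempty)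
    (fun i : Fin (n+1) => ‖w - ws i‖)
  rw [hj]
  have B1 : qstar w s a - qstar (ws j) s a ≤ φmax * ‖w - ws j‖ / (1 - γ) := hqlip w (ws j) s a
  have B3 : ⟪ψ (πs j) s a, ws j⟫ - ⟪ψ (πs j) s a, w⟫ ≤ φmax * ‖w - ws j‖ / (1 - γ) := by
    rw [← inner_sub_right]
    calc ⟪ψ (πs j) s a, ws j - w⟫ ≤ |⟪ψ (πs j) s a, ws j - w⟫| := le_abs_self _
      _ ≤ ‖ψ (πs j) s a‖ * ‖ws j - w‖ := abs_real_inner_le_norm _ _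
      _ ≤ (φmax / (1 - γ)) * ‖w - ws j‖ := by
          rw [norm_sub_rev]
          exact mul_le_mul_of_nonneg_right (hψnorm _ s a) (norm_nonneg _)
      _ = φmax * ‖w - ws j‖ / (1 - γ) := by ring
  have B4 : ⟪ψ (πs j) s a, w⟫ - qG s a ≤ 2 * ε / (1 - γ) := by
    have h1 : ⟪ψ (πs j) s a, w⟫ ≤ Qmax s a :=
      Finset.le_sup' (fun i : Fin (n+1) => ⟪ψ (πs i) s a, w⟫) (Finset.mem_univ j)
    linarith [hGPI s a]
  have B2 := hopt j s a
  have hrhs : (2 / (1 - γ)) * (φmax * ‖w - ws j‖ + ε)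
      = φmax * ‖w - ws j‖ / (1 - γ) + (φmax * ‖w - ws j‖ / (1 - γ) + 2 * ε / (1 - γ)) := by
    field_simp
    ring
  linarith
end

section
/- Let Ψ_k be a finite set of SF vectors, each optimal for some task (Ψ_k ⊆ CCS), where CCS = {ψ^π : ∃ w ∈ W such that ψ^π·w ≥ ψ^{π'}·w for all policies π'} and W is the simplex. Suppose that for every vertex w of the polyhedron P = {(w, v) ∈ ℝ^{d+1} : ψ·w ≤ v for all ψ ∈ Ψ_k, Σᵢ wᵢ = 1, wᵢ ≥ 0} (the corner weights of Ψ_k), the set Ψ_k contains an optimal vector: max_{ψ ∈ Ψ_k} ψ·w = v*_w = max over all policies π' of ψ^{π'}·w. Then max_{ψ ∈ Ψ_k} ψ·w = v*_w for every w ∈ W; i.e., Ψ_k already covers all of W. -/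
open Set

private lemma extreme_of_inter_halfspace' {E : Type*} [AddCommGroup E] [Module ℝ E]
    {P : Set E} (hPc : Convex ℝ P) (f : E →ₗ[ℝ] ℝ) (B : ℝ) {x : E}
    (hx : x ∈ Set.extremePoints ℝ (P ∩ {y | f y ≤ B})) (hfx : f x < B) :
    x ∈ Set.extremePoints ℝ P := by
  obtain ⟨⟨hxP, _⟩, hext⟩ := hx
  refine ⟨hxP, ?_⟩
  have key : ∀ y ∈ P, ∀ z ∈ P, ∀ a b : ℝ, 0 < a → 0 < b → a + b = 1 →
      a • y + b • z = x → f y ≤ B := by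
    intro y hy z hz a b ha hb hab hxyz
    by_contra hfy
    push_neg at hfy
    have hb' : b = 1 - a := by linarith
    subst hb'
    have hfxe : a * f y + (1 - a) * f z = f x := by
      rw [← hxyz]; simp
    have hfz : f z < B := by nlinarith [mul_lt_mul_of_pos_left hfy ha]
    set t : ℝ := (B - f x) / (f y - f x) with ht
    have hfyx : 0 < f y - f x := by linarith
    have ht0 : 0 < t := div_pos (by linarith) hfyx
    have ht1 : t < 1 := (div_lt_one hfyx).2 (by linarith)
    set y' : E := (1 - t) • x + t • y with hy'
    have hy'P : y' ∈ P := hPc hxP hy (by linarith) (le_of_lt ht0) (by ring)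
    have hfy' : f y' = B := by
      have h1 : f y' = (1 - t) * f x + t * f y := by rw [hy']; simp
      rw [h1, ht]
      field_simp
      ring
    have hs : (0:ℝ) < a + t * (1 - a) := by nlinarith
    have hs' : a + t * (1 - a) ≠ 0 := ne_of_gt hs
    clear_value t y'
    have hcomb : (a / (a + t * (1 - a))) • y' + (t * (1 - a) / (a + t * (1 - a))) • z = x := by
      rw [hy', ← hxyz]
      match_scalars <;> field_simp <;> first | ring1 | (left; ring1)
    have hres := hext ⟨hy'P, by rw [mem_setOf_eq, hfy']⟩ ⟨hz, le_of_lt hfz⟩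
      ⟨a / (a + t * (1 - a)), t * (1 - a) / (a + t * (1 - a)), div_pos ha hs,
        div_pos (by nlinarith) hs, by field_simp, hcomb⟩
    have hy'x : y' = x := hres
    rw [hy'x] at hfy'
    linarith
  intro y hy z hz hseg
  obtain ⟨a, b, ha, hb, hab, hxyz⟩ := hseg
  have hyB : f y ≤ B := key y hy z hz a b ha hb hab hxyz
  have hzB : f z ≤ B := key z hz y hy b a hb ha (by linarith) (by rw [← hxyz]; abel)
  exact hext ⟨hy, hyB⟩ ⟨hz, hzB⟩ ⟨a, b, ha, hb, hab, hxyz⟩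

/-- Corner-weight lemma: let Ψ_k ⊆ CCS be a finite set of SF vectors. If Ψ_k is
optimal at every corner weight (every vertex, i.e. extreme point, of the
polyhedron P determined by Ψ_k and the simplex constraints), then Ψ_k attains
the optimal scalarized value v*_w for every w in the simplex. -/
theorem corner_weights_cover_simplex
    {S A : Type} [Fintype S] [Fintype A] [DecidableEq S] [Nonempty S] [Nonempty A]
    {d : ℕ}
    (ψSF : (S → A) → Fin d → ℝ)
    (Ψk : Finset (Fin d → ℝ)) (hΨne : Ψk.Nonempty)
    (hsub : ∀ ψ ∈ Ψk, ∃ π : S → A, ψSF π = ψ ∧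
      ∃ w : Fin d → ℝ, (∑ i, w i = 1) ∧ (∀ i, 0 ≤ w i) ∧
        ∀ π' : S → A, (∑ i, ψSF π' i * w i) ≤ ∑ i, ψ i * w i)
    (P : Set ((Fin d → ℝ) × ℝ))
    (hP : P = {x | (∀ ψ ∈ Ψk, (∑ i, ψ i * x.1 i) ≤ x.2) ∧
      (∑ i, x.1 i = 1) ∧ ∀ i, 0 ≤ x.1 i})
    (hcorner : ∀ x ∈ Set.extremePoints ℝ P,
      (Ψk.sup' hΨne fun ψ => ∑ i, ψ i * x.1 i) =
        Finset.univ.sup' Finset.univ_nonempty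
          fun π : S → A => ∑ i, ψSF π i * x.1 i) :
    ∀ w : Fin d → ℝ, (∑ i, w i = 1) → (∀ i, 0 ≤ w i) →
      (Ψk.sup' hΨne fun ψ => ∑ i, ψ i * w i) =
        Finset.univ.sup' Finset.univ_nonempty
          fun π : S → A => ∑ i, ψSF π i * w i := by
  subst hP
  set E := (Fin d → ℝ) × ℝ
  set P : Set E := {x | (∀ ψ ∈ Ψk, (∑ i, ψ i * x.1 i) ≤ x.2) ∧
      (∑ i, x.1 i = 1) ∧ ∀ i, 0 ≤ x.1 i} with hPdef
  -- bound on all scalarized values over the simplex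
  set B : ℝ := Finset.univ.sup' Finset.univ_nonempty
      (fun π : S → A => ∑ i, |ψSF π i|) with hBdef
  -- every coordinate of a simplex point is at most 1
  have hle1 : ∀ w : Fin d → ℝ, (∑ i, w i = 1) → (∀ i, 0 ≤ w i) → ∀ i, w i ≤ 1 := by
    intro w hsum hnn i
    calc w i ≤ ∑ j, w j := Finset.single_le_sum (fun j _ => hnn j) (Finset.mem_univ i)
    _ = 1 := hsum
  have hvB : ∀ w : Fin d → ℝ, (∑ i, w i = 1) → (∀ i, 0 ≤ w i) →
      ∀ π : S → A, (∑ i, ψSF π i * w i) ≤ B := by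
    intro w hsum hnn π
    calc (∑ i, ψSF π i * w i) ≤ ∑ i, |ψSF π i| := by
          apply Finset.sum_le_sum
          intro i _
          calc ψSF π i * w i ≤ |ψSF π i| * w i :=
                mul_le_mul_of_nonneg_right (le_abs_self _) (hnn i)
          _ ≤ |ψSF π i| * 1 :=
                mul_le_mul_of_nonneg_left (hle1 w hsum hnn i) (abs_nonneg _)
          _ = |ψSF π i| := mul_one _
    _ ≤ B := Finset.le_sup' (fun π : S → A => ∑ i, |ψSF π i|) (Finset.mem_univ π)
  -- easy direction : f w ≤ v* w on the simplex
  have hfle : ∀ w : Fin d → ℝ,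
      (Ψk.sup' hΨne fun ψ => ∑ i, ψ i * w i) ≤
        Finset.univ.sup' Finset.univ_nonempty
          (fun π : S → A => ∑ i, ψSF π i * w i) := by
    intro w
    apply Finset.sup'_le
    intro ψ hψ
    obtain ⟨π, hπ, -⟩ := hsub ψ hψ
    calc (∑ i, ψ i * w i) = ∑ i, ψSF π i * w i := by rw [hπ]
    _ ≤ _ := Finset.le_sup' (fun π : S → A => ∑ i, ψSF π i * w i) (Finset.mem_univ π)
  -- P is convex
  have hPconv : Convex ℝ P := by
    intro x hx y hy a b ha hb hab
    have hfst : ∀ i, (a • x + b • y).1 i = a * x.1 i + b * y.1 i := by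
      intro i; simp [E]
    have hsnd : (a • x + b • y).2 = a * x.2 + b * y.2 := by simp [E]
    refine ⟨?_, ?_, ?_⟩
    · intro ψ hψ
      have h1 := hx.1 ψ hψ
      have h2 := hy.1 ψ hψ
      have hsum : (∑ i, ψ i * (a • x + b • y).1 i) =
          a * (∑ i, ψ i * x.1 i) + b * (∑ i, ψ i * y.1 i) := by
        rw [Finset.mul_sum, Finset.mul_sum, ← Finset.sum_add_distrib]
        apply Finset.sum_congr rfl
        intro i _
        rw [hfst i]; ring
      rw [hsum, hsnd]
      nlinarith
    · have : (∑ i, (a • x + b • y).1 i) = a * (∑ i, x.1 i) + b * (∑ i, y.1 i) := by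
        rw [Finset.mul_sum, Finset.mul_sum, ← Finset.sum_add_distrib]
        apply Finset.sum_congr rfl
        intro i _
        rw [hfst i]
      rw [this, hx.2.1, hy.2.1]; ring_nf; linarith
    · intro i
      rw [hfst i]
      have := hx.2.2 i
      have := hy.2.2 i
      positivity
  -- P is closed
  have hPclosed : IsClosed P := by
    have h1 : IsClosed {x : E | ∀ ψ ∈ Ψk, (∑ i, ψ i * x.1 i) ≤ x.2} := by
      rw [Set.setOf_forall]
      apply isClosed_iInter
      intro ψ
      rw [Set.setOf_forall]
      apply isClosed_iInter
      intro _
      exact isClosed_le (by fun_prop : Continuous fun x : (Fin d → ℝ) × ℝ => ∑ i, ψ i * x.1 i) continuous_snd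
    have h2 : IsClosed {x : E | ∑ i, x.1 i = 1} :=
      isClosed_eq (by fun_prop : Continuous fun x : (Fin d → ℝ) × ℝ => ∑ i, x.1 i) continuous_const
    have h3 : IsClosed {x : E | ∀ i, 0 ≤ x.1 i} := by
      rw [Set.setOf_forall]
      apply isClosed_iInter
      intro i
      exact isClosed_le continuous_const (by fun_prop : Continuous fun x : (Fin d → ℝ) × ℝ => x.1 i)
    exact h1.inter (h2.inter h3)
  -- the truncated polytope K
  set K : Set E := P ∩ {x : E | x.2 ≤ B} with hKdef
  have hKconv : Convex ℝ K :=
    hPconv.inter (convex_halfSpace_le (LinearMap.snd ℝ (Fin d → ℝ) ℝ).isLinear B)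
  have hKclosed : IsClosed K := hPclosed.inter (isClosed_le continuous_snd continuous_const)
  -- K is compact : it is a closed subset of a box
  obtain ⟨ψ0, hψ0⟩ := id hΨne
  have hKcomp : IsCompact K := by
    have hbox : IsCompact ((Set.univ.pi fun _ : Fin d => Set.Icc (0:ℝ) 1) ×ˢ
        Set.Icc (-(∑ i, |ψ0 i|)) B) :=
      (isCompact_univ_pi fun _ => isCompact_Icc).prod isCompact_Icc
    apply hbox.of_isClosed_subset hKclosed
    rintro x ⟨⟨hx1, hx2, hx3⟩, hxB⟩
    refine ⟨fun i _ => ⟨hx3 i, hle1 x.1 hx2 hx3 i⟩, ?_, hxB⟩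
    have hlow : -(∑ i, |ψ0 i|) ≤ ∑ i, ψ0 i * x.1 i := by
      rw [← Finset.sum_neg_distrib]
      apply Finset.sum_le_sum
      intro i _
      calc -|ψ0 i| = -|ψ0 i| * 1 := by ring
      _ ≤ -|ψ0 i| * x.1 i := by
            apply mul_le_mul_of_nonpos_left (hle1 x.1 hx2 hx3 i) (neg_nonpos.mpr (abs_nonneg _))
      _ ≤ ψ0 i * x.1 i := mul_le_mul_of_nonneg_right (neg_abs_le _) (hx3 i)
    exact le_trans hlow (hx1 ψ0 hψ0)
  -- the closed convex target set
  set C : Set E := {x : E | ∀ π : S → A, (∑ i, ψSF π i * x.1 i) ≤ x.2} with hCdef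
  have hCconv : Convex ℝ C := by
    intro x hx y hy a b ha hb hab π
    have hfst : ∀ i, (a • x + b • y).1 i = a * x.1 i + b * y.1 i := by
      intro i; simp [E]
    have hsnd : (a • x + b • y).2 = a * x.2 + b * y.2 := by simp [E]
    have hsum : (∑ i, ψSF π i * (a • x + b • y).1 i) =
        a * (∑ i, ψSF π i * x.1 i) + b * (∑ i, ψSF π i * y.1 i) := by
      rw [Finset.mul_sum, Finset.mul_sum, ← Finset.sum_add_distrib]
      apply Finset.sum_congr rfl
      intro i _
      rw [hfst i]; ring
    have h1 := hx π
    have h2 := hy π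
    show (∑ i, ψSF π i * (a • x + b • y).1 i) ≤ (a • x + b • y).2
    rw [hsum, hsnd]
    nlinarith
  have hCclosed : IsClosed C := by
    rw [hCdef, Set.setOf_forall]
    apply isClosed_iInter
    intro π
    exact isClosed_le (by fun_prop : Continuous fun x : (Fin d → ℝ) × ℝ => ∑ i, ψSF π i * x.1 i) continuous_snd
  -- extreme points of K lie in C
  have hextC : Set.extremePoints ℝ K ⊆ C := by
    intro x hx
    have hxK : x ∈ K := hx.1
    obtain ⟨⟨hx1, hx2, hx3⟩, hxB⟩ := hxK
    have hxB' : x.2 ≤ B := hxB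
    rcases eq_or_lt_of_le hxB' with heq | hlt
    · intro π
      rw [heq]
      exact hvB x.1 hx2 hx3 π
    · have hxP : x ∈ Set.extremePoints ℝ P :=
        extreme_of_inter_halfspace' hPconv (LinearMap.snd ℝ (Fin d → ℝ) ℝ) B hx hlt
      have hc := hcorner x hxP
      have hsup : (Ψk.sup' hΨne fun ψ => ∑ i, ψ i * x.1 i) ≤ x.2 :=
        Finset.sup'_le _ _ fun ψ hψ => hx1 ψ hψ
      intro π
      calc (∑ i, ψSF π i * x.1 i) ≤ Finset.univ.sup' Finset.univ_nonempty
            (fun π : S → A => ∑ i, ψSF π i * x.1 i) :=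
            Finset.le_sup' (fun π : S → A => ∑ i, ψSF π i * x.1 i) (Finset.mem_univ π)
      _ = Ψk.sup' hΨne fun ψ => ∑ i, ψ i * x.1 i := hc.symm
      _ ≤ x.2 := hsup
  -- Krein–Milman : K ⊆ C
  have hKC : K ⊆ C := by
    rw [← closure_convexHull_extremePoints hKcomp hKconv]
    exact closure_minimal (convexHull_min hextC hCconv) hCclosed
  -- conclude
  intro w hsum hnn
  set p : E := (w, Ψk.sup' hΨne fun ψ => ∑ i, ψ i * w i) with hpdef
  have hpP : p ∈ P := by
    refine ⟨fun ψ hψ => Finset.le_sup' (fun ψ => ∑ i, ψ i * w i) hψ, hsum, hnn⟩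
  have hpK : p ∈ K := by
    refine ⟨hpP, ?_⟩
    have h1 := hfle w
    have h2 : (Finset.univ.sup' Finset.univ_nonempty
        (fun π : S → A => ∑ i, ψSF π i * w i)) ≤ B :=
      Finset.sup'_le _ _ fun π _ => hvB w hsum hnn π
    exact le_trans h1 h2
  have hpC := hKC hpK
  apply le_antisymm (hfle w)
  exact Finset.sup'_le _ _ fun π _ => hpC π
end
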